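/- For bit strings 𝐳₁,𝐳₂ ∈ {0,1}ⁿ let σ_{𝐳₁,𝐳₂} := ⊗ᵢ σ_{z₁ᵢ,z₂ᵢ} be the n-qubit Pauli matrix, where σ_{0,0}=I, σ_{1,0}=σ_X, σ_{0,1}=σ_Z, σ_{1,1}=σ_Y=iσ_Xσ_Z. Then for every 2ⁿ×2ⁿ complex matrix ρ, the transpose admits the decomposition ρᵀ = 2^{−n} Σ_{𝐳₁,𝐳₂ ∈ {0,1}ⁿ} (−1)^{𝐳₁·𝐳₂} σ_{𝐳₁,𝐳₂} ρ σ_{𝐳₁,𝐳₂}, where 𝐳₁·𝐳₂ = Σᵢ z₁ᵢ z₂ᵢ. -/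
import Mathlib


open Matrix
open scoped Kronecker

/-- The single-qubit Pauli matrices `σ_{z₁,z₂}` (`σ_{0,0} = I`, `σ_{1,0} = σ_X`,
`σ_{0,1} = σ_Z`, `σ_{1,1} = σ_Y = i σ_X σ_Z`), with the qubit basis indexed by `Bool`
(`false = |0⟩`, `true = |1⟩`). -/
def pauli1 : Bool → Bool → Matrix Bool Bool ℂ
  | false, false => fun x y => if x = y then 1 else 0
  | true,  false => fun x y => if x ≠ y then 1 else 0
  | false, true  => fun x y => if x = y then (if x then -1 else 1) else 0
  | true,  true  => fun x y => if x ≠ y then (if x then Complex.I else -Complex.I) else 0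

/-- The `n`-qubit Pauli matrix `σ_{𝐳₁,𝐳₂} = ⊗ᵢ σ_{z₁ᵢ,z₂ᵢ}` acting on
`ℂ^{2ⁿ} = (Fin n → Bool) → ℂ` (entrywise Kronecker product). -/
def pauliN (n : ℕ) (z₁ z₂ : Fin n → Bool) : Matrix (Fin n → Bool) (Fin n → Bool) ℂ :=
  fun x y => ∏ i, pauli1 (z₁ i) (z₂ i) (x i) (y i)

/-- `𝐳₁ · 𝐳₂ = ∑ᵢ z₁ᵢ z₂ᵢ`. -/
def dotB {n : ℕ} (z₁ z₂ : Fin n → Bool) : ℕ :=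
  (Finset.univ.filter fun i => z₁ i && z₂ i).card

/-- The unnormalized maximally entangled vector `|Ψ⁺⟩ = ∑ᵢ eᵢ ⊗ eᵢ`. -/
def psiPlus (n : ℕ) : (Fin n → Bool) × (Fin n → Bool) → ℂ :=
  fun p => if p.1 = p.2 then 1 else 0

/-- The normalized `n`-qubit Bell states `|Ψ_{𝐳₁,𝐳₂}⟩ = 2^{-n/2} (σ_{𝐳₁,𝐳₂} ⊗ I)|Ψ⁺⟩`. -/
noncomputable def bell (n : ℕ) (z₁ z₂ : Fin n → Bool) :
    (Fin n → Bool) × (Fin n → Bool) → ℂ :=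
  ((Real.sqrt (2 ^ n) : ℂ))⁻¹ •
    (pauliN n z₁ z₂ ⊗ₖ (1 : Matrix (Fin n → Bool) (Fin n → Bool) ℂ)).mulVec (psiPlus n)

/-- The swap operator `S` on `ℂ^d ⊗ ℂ^d`, `S[(i,j),(k,l)] = δ_{il} δ_{jk}`. -/
def swapOp (α : Type*) [DecidableEq α] : Matrix (α × α) (α × α) ℂ :=
  fun p q => if p.1 = q.2 ∧ p.2 = q.1 then 1 else 0

open Finset
lemma pauli1_apply (z1 z2 x y : Bool) :
    pauli1 z1 z2 x y = if y = xor z1 x then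
      (if z1 && z2 then Complex.I else 1) * (if z2 && y then -1 else 1) else 0 := by
  cases z1 <;> cases z2 <;> cases x <;> cases y <;> simp [pauli1]

lemma prod_ite_one {n : ℕ} (p : Fin n → Prop) [DecidablePred p] (c : ℂ) :
    ∏ i, (if p i then c else 1) = c ^ (univ.filter p).card := by
  calc ∏ i, (if p i then c else 1) = ∏ i, c ^ (if p i then 1 else 0) := by
        apply Finset.prod_congr rfl; intro i _; split <;> simp
    _ = c ^ ∑ i, (if p i then 1 else 0) := by rw [Finset.prod_pow_eq_pow_sum]
    _ = _ := by rw [Finset.card_filter]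

lemma pauliN_apply {n : ℕ} (z1 z2 x a : Fin n → Bool) :
    pauliN n z1 z2 x a = if a = (fun i => xor (z1 i) (x i)) then
      Complex.I ^ dotB z1 z2 * (-1 : ℂ) ^ dotB z2 a else 0 := by
  unfold pauliN
  simp only [pauli1_apply]
  by_cases h : a = fun i => xor (z1 i) (x i)
  · rw [if_pos h]
    have h' : ∀ i, a i = xor (z1 i) (x i) := fun i => congrFun h i
    calc ∏ i, (if a i = xor (z1 i) (x i) then
            (if z1 i && z2 i then Complex.I else 1) * (if z2 i && a i then (-1:ℂ) else 1) else 0)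
        = ∏ i, ((if z1 i && z2 i then Complex.I else 1) * (if z2 i && a i then (-1:ℂ) else 1)) := by
          exact Finset.prod_congr rfl fun i _ => if_pos (h' i)
      _ = (∏ i, (if z1 i && z2 i then Complex.I else 1)) * ∏ i, (if z2 i && a i then (-1:ℂ) else 1) :=
          Finset.prod_mul_distrib
      _ = _ := by rw [prod_ite_one, prod_ite_one]; rfl
  · rw [if_neg h]
    rw [funext_iff] at h; push_neg at h
    obtain ⟨i, hi⟩ := h
    exact Finset.prod_eq_zero (Finset.mem_univ i) (if_neg hi)

lemma orth {n : ℕ} (u v : Fin n → Bool) :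
    ∑ z : Fin n → Bool, ((-1:ℂ) ^ dotB z u) * ((-1:ℂ) ^ dotB z v)
      = if u = v then (2:ℂ)^n else 0 := by
  have key : ∀ z : Fin n → Bool, ((-1:ℂ) ^ dotB z u) * ((-1:ℂ) ^ dotB z v)
      = ∏ i, ((if z i && u i then (-1:ℂ) else 1) * (if z i && v i then (-1:ℂ) else 1)) := by
    intro z
    rw [Finset.prod_mul_distrib, prod_ite_one, prod_ite_one]; rfl
  simp only [key]
  rw [← Fintype.prod_sum (fun i (b : Bool) =>
      (if b && u i then (-1:ℂ) else 1) * (if b && v i then (-1:ℂ) else 1))]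
  have : ∀ i : Fin n, (∑ b : Bool, (if b && u i then (-1:ℂ) else 1) * (if b && v i then (-1:ℂ) else 1))
      = if u i = v i then 2 else 0 := by
    intro i
    rw [Fintype.sum_bool]
    cases hu : u i <;> cases hv : v i <;> norm_num
  simp only [this]
  by_cases h : u = v
  · rw [if_pos h]
    have : ∀ i : Fin n, (if u i = v i then (2:ℂ) else 0) = 2 := fun i => if_pos (congrFun h i)
    simp only [this, Finset.prod_const, Finset.card_univ, Fintype.card_fin]
  · rw [if_neg h]
    rw [funext_iff] at h; push_neg at h
    obtain ⟨i, hi⟩ := h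
    exact Finset.prod_eq_zero (Finset.mem_univ i) (if_neg hi)

lemma twirl_apply {n : ℕ} (z1 z2 : Fin n → Bool)
    (ρ : Matrix (Fin n → Bool) (Fin n → Bool) ℂ) (x y : Fin n → Bool) :
    (pauliN n z1 z2 * ρ * pauliN n z1 z2) x y
      = (-1:ℂ) ^ dotB z1 z2 * ((-1:ℂ) ^ dotB z2 (fun i => xor (z1 i) (x i))
          * ((-1:ℂ) ^ dotB z2 y
          * ρ (fun i => xor (z1 i) (x i)) (fun i => xor (z1 i) (y i)))) := by
  have hbool : ∀ p q r : Bool, (r = xor p q) ↔ (q = xor p r) := by decide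
  have hright : ∀ b : Fin n → Bool, pauliN n z1 z2 b y =
      if b = (fun i => xor (z1 i) (y i)) then
        Complex.I ^ dotB z1 z2 * (-1:ℂ) ^ dotB z2 y else 0 := by
    intro b
    rw [pauliN_apply]
    refine if_congr ?_ rfl rfl
    simp only [funext_iff]
    exact forall_congr' fun i => hbool _ _ _
  rw [Matrix.mul_apply]
  simp only [hright, mul_ite, mul_zero]
  rw [Finset.sum_ite_eq' Finset.univ]
  simp only [Finset.mem_univ, if_true]
  rw [Matrix.mul_apply]
  simp only [pauliN_apply, ite_mul, zero_mul]
  rw [Finset.sum_ite_eq' Finset.univ]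
  simp only [Finset.mem_univ, if_true]
  have hI : (Complex.I ^ dotB z1 z2) * (Complex.I ^ dotB z1 z2) = (-1:ℂ) ^ dotB z1 z2 := by
    rw [← mul_pow, Complex.I_mul_I]
  rw [← hI]; ring

theorem transpose_eq_pauli_twirl (n : ℕ) (ρ : Matrix (Fin n → Bool) (Fin n → Bool) ℂ) :
    ρᵀ = ((2 : ℂ) ^ n)⁻¹ •
      ∑ z₁ : Fin n → Bool, ∑ z₂ : Fin n → Bool,
        ((-1 : ℂ) ^ dotB z₁ z₂) • (pauliN n z₁ z₂ * ρ * pauliN n z₁ z₂) := by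
  have hbool : ∀ a b c : Bool, (xor a b = c) ↔ (a = xor b c) := by decide
  have hpow : ∀ d : ℕ, ((-1:ℂ)^d) * ((-1:ℂ)^d) = 1 := by
    intro d; rw [← mul_pow]; norm_num
  ext x y
  simp only [transpose_apply, Matrix.smul_apply, Matrix.sum_apply, smul_eq_mul]
  have key : ∀ z1 z2 : Fin n → Bool,
      (-1:ℂ)^dotB z1 z2 * ((pauliN n z1 z2 * ρ * pauliN n z1 z2) x y)
      = ((-1:ℂ)^dotB z2 (fun i => xor (z1 i) (x i)) * (-1:ℂ)^dotB z2 y)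
        * ρ (fun i => xor (z1 i) (x i)) (fun i => xor (z1 i) (y i)) := by
    intro z1 z2
    rw [twirl_apply, ← mul_assoc, hpow (dotB z1 z2), one_mul]; ring
  simp only [key]
  have inner : ∀ z1 : Fin n → Bool,
      (∑ z2 : Fin n → Bool, ((-1:ℂ)^dotB z2 (fun i => xor (z1 i) (x i)) * (-1:ℂ)^dotB z2 y)
        * ρ (fun i => xor (z1 i) (x i)) (fun i => xor (z1 i) (y i)))
      = (if (fun i => xor (z1 i) (x i)) = y then (2:ℂ)^n else 0)
        * ρ (fun i => xor (z1 i) (x i)) (fun i => xor (z1 i) (y i)) := by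
    intro z1
    rw [← Finset.sum_mul, orth]
  simp only [inner]
  have hcond : ∀ z1 : Fin n → Bool,
      ((fun i => xor (z1 i) (x i)) = y) ↔ (z1 = fun i => xor (x i) (y i)) := by
    intro z1; simp only [funext_iff]
    exact forall_congr' fun i => hbool _ _ _
  simp only [hcond, ite_mul, zero_mul]
  rw [Finset.sum_ite_eq' Finset.univ]
  simp only [Finset.mem_univ, if_true]
  have hx : (fun i => xor (xor (x i) (y i)) (x i)) = y := by
    funext i
    have : ∀ a b : Bool, xor (xor a b) a = b := by decide
    exact this _ _
  have hy : (fun i => xor (xor (x i) (y i)) (y i)) = x := by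
    funext i
    have : ∀ a b : Bool, xor (xor a b) b = a := by decide
    exact this _ _
  rw [hx, hy, inv_mul_cancel_left₀ (pow_ne_zero _ two_ne_zero)]
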